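/- arXiv:2408.14648 — 2 statements merged into one kernel-verified Lean document; each statement's English description precedes it below -/
import Mathlib

section
/- Let F be an induced-2C2-free family of subsets of [n] with C♭ ⊆ F, and let A, B ∈ F \ C♭ with B ⊊ A. Then exactly one of the following occurs: (i) there exists j with 1 ≤ j ≤ n−1 such that B ⊊ C_j ⊊ A; or (ii) there exists a unique j with 1 ≤ j ≤ n−1 such that B ⊆ S_j ⊆ A and C_j is incomparable (under inclusion) to both A and B. -/
/-- `F ⊆ 𝒫([n])` contains an induced copy of the poset `2C₂`: four sets
`A ⊊ A'`, `B ⊊ B'`, with each of `A, A'` incomparable to each of `B, B'`. -/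
def Contains2C2 {n : ℕ} (F : Finset (Finset (Fin n))) : Prop :=
  ∃ A A' B B' : Finset (Fin n), A ∈ F ∧ A' ∈ F ∧ B ∈ F ∧ B' ∈ F ∧
    A ⊂ A' ∧ B ⊂ B' ∧
    ¬ A ⊆ B ∧ ¬ B ⊆ A ∧ ¬ A ⊆ B' ∧ ¬ B' ⊆ A ∧
    ¬ A' ⊆ B ∧ ¬ B ⊆ A' ∧ ¬ A' ⊆ B' ∧ ¬ B' ⊆ A'

/-- `F` is induced-`2C₂`-saturated: it is induced-`2C₂`-free, and adding any
missing set creates an induced copy of `2C₂`. -/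
def Saturated2C2 {n : ℕ} (F : Finset (Finset (Fin n))) : Prop :=
  ¬ Contains2C2 F ∧ ∀ S : Finset (Fin n), S ∉ F → Contains2C2 (insert S F)

/-- The chain element `C_i = [i] = {1,…,i}` (0-indexed: `{x : Fin n | x < i}`). -/
def chainC (n i : ℕ) : Finset (Fin n) := Finset.univ.filter (fun x => (x : ℕ) < i)

/-- The maximal chain `C♭ = {C_0, C_1, …, C_n}`. -/
def Cflat (n : ℕ) : Finset (Finset (Fin n)) := (Finset.range (n + 1)).image (chainC n)

/-- The shackle `S_i = [i-1] ∪ {i+1}` (1-indexed elements; 0-indexed: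
`{x : Fin n | x + 1 < i or x = i}`), meaningful for `1 ≤ i ≤ n-1`. -/
def shackle (n i : ℕ) : Finset (Fin n) :=
  Finset.univ.filter (fun x => (x : ℕ) + 1 < i ∨ (x : ℕ) = i)

/-- Two sets are comparable if one contains the other. -/
def Comp {n : ℕ} (A B : Finset (Fin n)) : Prop := A ⊆ B ∨ B ⊆ A

/-- Two sets are incomparable if neither contains the other. -/
def Incomp {n : ℕ} (A B : Finset (Fin n)) : Prop := ¬ A ⊆ B ∧ ¬ B ⊆ A

section H
variable {n : ℕ}

lemma mem_chainC {j : ℕ} {x : Fin n} : x ∈ chainC n j ↔ (x:ℕ) < j := by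
  simp [chainC]

lemma mem_shackle {j : ℕ} {x : Fin n} : x ∈ shackle n j ↔ (x:ℕ)+1 < j ∨ (x:ℕ) = j := by
  simp [shackle]

lemma chainC_mem_Cflat {j : ℕ} (h : j ≤ n) : chainC n j ∈ Cflat n := by
  rw [Cflat, Finset.mem_image]
  exact ⟨j, Finset.mem_range.mpr (by omega), rfl⟩

end H

/-- If `F` is induced-`2C₂`-free, contains the maximal chain `C♭`, and
`A, B ∈ F \ C♭` with `B ⊊ A`, then exactly one of the following holds:
(i) some `C_j` (with `1 ≤ j ≤ n-1`) satisfies `B ⊊ C_j ⊊ A`; or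
(ii) there is a unique `j` with `1 ≤ j ≤ n-1` such that `B ⊆ S_j ⊆ A` and
`C_j` is incomparable to both `A` and `B`. -/
theorem two_related_elements_structure (n : ℕ)
    (F : Finset (Finset (Fin n))) (hfree : ¬ Contains2C2 F) (hC : Cflat n ⊆ F)
    (A B : Finset (Fin n)) (hA : A ∈ F) (hA' : A ∉ Cflat n)
    (hB : B ∈ F) (hB' : B ∉ Cflat n) (hBA : B ⊂ A) :
    Xor'
      (∃ j, 1 ≤ j ∧ j + 1 ≤ n ∧ B ⊂ chainC n j ∧ chainC n j ⊂ A)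
      (∃! j, 1 ≤ j ∧ j + 1 ≤ n ∧ B ⊆ shackle n j ∧ shackle n j ⊆ A ∧
        Incomp (chainC n j) A ∧ Incomp (chainC n j) B) := by
  -- A is not the full set, B is nonempty
  have hAu : A ≠ Finset.univ := by
    intro h
    apply hA'
    have huniv : (Finset.univ : Finset (Fin n)) = chainC n n := by
      ext x; simp [chainC, x.isLt]
    rw [h, huniv]; exact chainC_mem_Cflat le_rfl
  have hBne : B.Nonempty := by
    rcases Finset.eq_empty_or_nonempty B with h | h
    · exfalso; apply hB'
      have hemp : (∅ : Finset (Fin n)) = chainC n 0 := by ext x; simp [chainC]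
      rw [h, hemp]; exact chainC_mem_Cflat (Nat.zero_le n)
    · exact h
  have hAcne : Aᶜ.Nonempty := by
    rw [Finset.nonempty_iff_ne_empty]; simpa using hAu
  set a : Fin n := Aᶜ.min' hAcne with ha_def
  set b : Fin n := B.max' hBne with hb_def
  have haA : a ∉ A := by
    have := Finset.min'_mem Aᶜ hAcne
    simpa using this
  have K1 : ∀ x : Fin n, (x:ℕ) < (a:ℕ) → x ∈ A := by
    intro x hx
    by_contra h
    have := Finset.min'_le Aᶜ x (Finset.mem_compl.mpr h)
    rw [Fin.le_def] at this; omega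
  have hbB : b ∈ B := Finset.max'_mem B hBne
  have K2 : ∀ x ∈ B, (x:ℕ) ≤ (b:ℕ) := by
    intro x hx
    have := Finset.le_max' B x hx
    rwa [Fin.le_def] at this
  have haB : a ∉ B := fun h => haA (hBA.subset h)
  have hbA : b ∈ A := hBA.subset hbB
  have hbn : (b:ℕ) < n := b.isLt
  have han : (a:ℕ) < n := a.isLt
  by_cases hcase : (b:ℕ) < (a:ℕ)
  · -- case (i)
    left
    constructor
    · refine ⟨(b:ℕ)+1, by omega, by omega, ?_, ?_⟩
      · rw [Finset.ssubset_iff_subset_ne]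
        constructor
        · intro x hx; rw [mem_chainC]; exact Nat.lt_succ_of_le (K2 x hx)
        · intro h; exact hB' (h ▸ chainC_mem_Cflat (by omega))
      · rw [Finset.ssubset_iff_subset_ne]
        constructor
        · intro x hx; rw [mem_chainC] at hx; exact K1 x (by omega)
        · intro h; exact hA' (h ▸ chainC_mem_Cflat (by omega))
    · rintro ⟨j, ⟨_, _, _, _, ⟨hCA1, _⟩, ⟨_, hCB2⟩⟩, _⟩
      -- hCA1 : ¬ chainC n j ⊆ A gives a < j ; hCB2 : ¬ B ⊆ chainC n j gives j ≤ b
      have h1 : (a:ℕ) < j := by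
        by_contra h
        apply hCA1
        intro x hx
        rw [mem_chainC] at hx
        exact K1 x (by omega)
      have h2 : j ≤ (b:ℕ) := by
        by_contra h
        apply hCB2
        intro x hx
        rw [mem_chainC]
        have := K2 x hx; omega
      omega
  · -- case (ii); first a < b
    have hab : (a:ℕ) < (b:ℕ) := by
      rcases Nat.lt_or_ge (a:ℕ) (b:ℕ) with h | h
      · exact h
      · exfalso
        have : (a:ℕ) = (b:ℕ) := by omega
        exact haA (Fin.ext this ▸ hbA)
    -- claim b = a + 1, else build a 2C2
    have hb1 : (b:ℕ) = (a:ℕ) + 1 := by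
      by_contra h
      have h2 : (a:ℕ) + 2 ≤ (b:ℕ) := by omega
      apply hfree
      refine ⟨chainC n ((a:ℕ)+1), chainC n ((a:ℕ)+2), B, A,
        hC (chainC_mem_Cflat (by omega)), hC (chainC_mem_Cflat (by omega)), hB, hA,
        ?_, hBA, ?_, ?_, ?_, ?_, ?_, ?_, ?_, ?_⟩
      · rw [Finset.ssubset_iff_of_subset (by intro x hx; rw [mem_chainC] at *; omega)]
        exact ⟨⟨(a:ℕ)+1, by omega⟩, by simp [mem_chainC], by simp [mem_chainC]⟩
      · intro h'; exact haB (h' (mem_chainC.mpr (by omega)))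
      · intro h'; have := mem_chainC.mp (h' hbB); omega
      · intro h'; exact haA (h' (mem_chainC.mpr (by omega)))
      · intro h'; have := mem_chainC.mp (h' hbA); omega
      · intro h'; exact haB (h' (mem_chainC.mpr (by omega)))
      · intro h'; have := mem_chainC.mp (h' hbB); omega
      · intro h'; exact haA (h' (mem_chainC.mpr (by omega)))
      · intro h'; have := mem_chainC.mp (h' hbA); omega
    right
    constructor
    · refine ⟨(a:ℕ)+1, ⟨by omega, by omega, ?_, ?_, ⟨?_, ?_⟩, ⟨?_, ?_⟩⟩, ?_⟩
      · -- B ⊆ shackle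
        intro x hx
        rw [mem_shackle]
        have hx1 := K2 x hx
        have hx2 : (x:ℕ) ≠ (a:ℕ) := fun h' => haB (Fin.ext h' ▸ hx)
        omega
      · -- shackle ⊆ A
        intro x hx
        rw [mem_shackle] at hx
        rcases hx with h' | h'
        · exact K1 x (by omega)
        · have : x = b := Fin.ext (by omega)
          exact this ▸ hbA
      · intro h'; exact haA (h' (mem_chainC.mpr (by omega)))
      · intro h'; have := mem_chainC.mp (h' hbA); omega
      · intro h'; exact haB (h' (mem_chainC.mpr (by omega)))
      · intro h'; have := mem_chainC.mp (h' hbB); omega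
      · rintro j ⟨_, _, _, _, ⟨hCA1, _⟩, ⟨_, hCB2⟩⟩
        have h1 : (a:ℕ) < j := by
          by_contra h'
          apply hCA1
          intro x hx
          rw [mem_chainC] at hx
          exact K1 x (by omega)
        have h2 : j ≤ (b:ℕ) := by
          by_contra h'
          apply hCB2
          intro x hx
          rw [mem_chainC]
          have := K2 x hx; omega
        omega
    · rintro ⟨j, _, _, hBC, hCA⟩
      have h1 : (b:ℕ) < j := mem_chainC.mp (hBC.subset hbB)
      have h2 : a ∉ chainC n j := fun h' => haA (hCA.subset h')
      rw [mem_chainC] at h2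
      omega
end

section
/- For integers n ≥ 3 and 2 ≤ i ≤ n−1, the family F*_i consisting of the maximal chain C♭, the singletons {2}, {3}, …, {i}, and the anti-singletons [n]∖{i}, [n]∖{i+1}, …, [n]∖{n−1}, is induced-2C2-free. -/
/-- The family `F*_i`: the maximal chain `C♭`, the singletons `{2},…,{i}`, and
the anti-singletons `[n]∖{i}, [n]∖{i+1}, …, [n]∖{n-1}` (1-indexed). -/
def Fstar (n i : ℕ) : Finset (Finset (Fin n)) :=
  Cflat n ∪
    (Finset.univ.filter (fun x : Fin n => 1 ≤ (x : ℕ) ∧ (x : ℕ) + 1 ≤ i)).image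
      (fun x => ({x} : Finset (Fin n))) ∪
    (Finset.univ.filter (fun x : Fin n => i ≤ (x : ℕ) + 1 ∧ (x : ℕ) + 2 ≤ n)).image
      (fun x => (Finset.univ \ {x} : Finset (Fin n)))

lemma chainC_subset {n j k : ℕ} (h : j ≤ k) : chainC n j ⊆ chainC n k := by
  intro x hx
  simp only [chainC, Finset.mem_filter, Finset.mem_univ, true_and] at *
  omega

lemma singleton_subset_chainC {n : ℕ} {x : Fin n} {k : ℕ} (h : (x:ℕ) < k) :
    ({x} : Finset (Fin n)) ⊆ chainC n k := by
  simp [chainC, h]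

lemma chainC_subset_anti {n k : ℕ} {y : Fin n} (h : k ≤ (y:ℕ)) :
    chainC n k ⊆ Finset.univ \ {y} := by
  intro x hx
  simp only [chainC, Finset.mem_filter, Finset.mem_univ, true_and] at hx
  simp only [Finset.mem_sdiff, Finset.mem_univ, Finset.mem_singleton, true_and]
  intro hxy; subst hxy; omega

lemma singleton_subset_anti {n : ℕ} {x y : Fin n} (h : x ≠ y) :
    ({x} : Finset (Fin n)) ⊆ Finset.univ \ {y} := by
  simp [h]

lemma anti_card {n : ℕ} (y : Fin n) : (Finset.univ \ {y} : Finset (Fin n)).card = n - 1 := by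
  rw [Finset.card_sdiff_of_subset (Finset.subset_univ _)]; simp

lemma mem_Fstar {n i : ℕ} {S : Finset (Fin n)} (h : S ∈ Fstar n i) :
    (∃ k, k ≤ n ∧ S = chainC n k) ∨
    (∃ x : Fin n, 1 ≤ (x:ℕ) ∧ (x:ℕ)+1 ≤ i ∧ S = {x}) ∨
    (∃ y : Fin n, i ≤ (y:ℕ)+1 ∧ (y:ℕ)+2 ≤ n ∧ S = Finset.univ \ {y}) := by
  simp only [Fstar, Cflat, Finset.mem_union, Finset.mem_image, Finset.mem_filter,
    Finset.mem_range, Finset.mem_univ, true_and, Nat.lt_succ_iff] at h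
  rcases h with ((⟨k, hk, hS⟩) | ⟨x, hx, hS⟩) | ⟨y, hy, hS⟩
  · exact Or.inl ⟨k, hk, hS.symm⟩
  · exact Or.inr (Or.inl ⟨x, hx.1, hx.2, hS.symm⟩)
  · exact Or.inr (Or.inr ⟨y, hy.1, hy.2, hS.symm⟩)

lemma pair_case (n i : ℕ) (hn : 3 ≤ n) (hi2 : 2 ≤ i) (hin : i + 1 ≤ n) (k : ℕ)
    (B B' : Finset (Fin n)) (hB : B ∈ Fstar n i) (hB' : B' ∈ Fstar n i)
    (hBB : B ⊂ B') (h1 : ¬ chainC n k ⊆ B) (h2 : ¬ B ⊆ chainC n k)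
    (h3 : ¬ chainC n k ⊆ B') (h4 : ¬ B' ⊆ chainC n k) : False := by
  rcases mem_Fstar hB with ⟨m, _, rfl⟩ | ⟨x, hx1, hx2, rfl⟩ | ⟨y, hy1, hy2, rfl⟩
  · rcases le_total k m with h | h
    · exact h1 (chainC_subset h)
    · exact h2 (chainC_subset h)
  · -- B = {x}
    rcases mem_Fstar hB' with ⟨m, _, rfl⟩ | ⟨z, hz1, hz2, rfl⟩ | ⟨y', hy1, hy2, rfl⟩
    · rcases le_total k m with h | h
      · exact h3 (chainC_subset h)
      · exact h4 (chainC_subset h)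
    · have := Finset.card_lt_card hBB
      simp at this
    · -- B' = univ \ {y'}
      have hkx : ¬ (x:ℕ) < k := fun h => h2 (singleton_subset_chainC h)
      have hky : ¬ k ≤ (y':ℕ) := fun h => h3 (chainC_subset_anti h)
      omega
  · -- B = univ \ {y}
    rcases mem_Fstar hB' with ⟨m, _, rfl⟩ | ⟨z, hz1, hz2, rfl⟩ | ⟨y', hy1, hy2, rfl⟩
    · rcases le_total k m with h | h
      · exact h3 (chainC_subset h)
      · exact h4 (chainC_subset h)
    · have := Finset.card_lt_card hBB
      rw [anti_card] at this
      simp at this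
      omega
    · have := Finset.card_lt_card hBB
      rw [anti_card, anti_card] at this
      omega


/-- For `n ≥ 3` and `2 ≤ i ≤ n-1`, the family `F*_i` is induced-`2C₂`-free. -/
theorem Fstar_free (n i : ℕ) (hn : 3 ≤ n) (hi2 : 2 ≤ i) (hin : i + 1 ≤ n) :
    ¬ Contains2C2 (Fstar n i) := by
  rintro ⟨A, A', B, B', hA, hA', hB, hB', hAA, hBB, c1, c2, c3, c4, c5, c6, c7, c8⟩
  -- no chain elements
  rcases mem_Fstar hA with ⟨k, _, rfl⟩ | hAo
  · exact pair_case n i hn hi2 hin k B B' hB hB' hBB c1 c2 c3 c4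
  rcases mem_Fstar hA' with ⟨k, _, rfl⟩ | hA'o
  · exact pair_case n i hn hi2 hin k B B' hB hB' hBB c5 c6 c7 c8
  rcases mem_Fstar hB with ⟨k, _, rfl⟩ | hBo
  · exact pair_case n i hn hi2 hin k A A' hA hA' hAA c2 c1 c6 c5
  rcases mem_Fstar hB' with ⟨k, _, rfl⟩ | hB'o
  · exact pair_case n i hn hi2 hin k A A' hA hA' hAA c4 c3 c8 c7
  -- A must be a singleton, A' an anti-singleton (and similarly B, B')
  have key : ∀ (S T : Finset (Fin n)),
      ((∃ x : Fin n, 1 ≤ (x:ℕ) ∧ (x:ℕ)+1 ≤ i ∧ S = {x}) ∨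
       (∃ y : Fin n, i ≤ (y:ℕ)+1 ∧ (y:ℕ)+2 ≤ n ∧ S = Finset.univ \ {y})) →
      ((∃ x : Fin n, 1 ≤ (x:ℕ) ∧ (x:ℕ)+1 ≤ i ∧ T = {x}) ∨
       (∃ y : Fin n, i ≤ (y:ℕ)+1 ∧ (y:ℕ)+2 ≤ n ∧ T = Finset.univ \ {y})) →
      S ⊂ T →
      ∃ (x y : Fin n), 1 ≤ (x:ℕ) ∧ (x:ℕ)+1 ≤ i ∧ i ≤ (y:ℕ)+1 ∧ (y:ℕ)+2 ≤ n ∧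
        S = {x} ∧ T = Finset.univ \ {y} := by
    rintro S T (⟨x, hx1, hx2, rfl⟩ | ⟨y, hy1, hy2, rfl⟩) hT hST
    · rcases hT with ⟨z, hz1, hz2, rfl⟩ | ⟨y, hy1, hy2, rfl⟩
      · have := Finset.card_lt_card hST; simp at this
      · exact ⟨x, y, hx1, hx2, hy1, hy2, rfl, rfl⟩
    · rcases hT with ⟨z, hz1, hz2, rfl⟩ | ⟨y', hy'1, hy'2, rfl⟩
      · have := Finset.card_lt_card hST
        rw [anti_card] at this; simp at this; omega
      · have := Finset.card_lt_card hST
        rw [anti_card, anti_card] at this; omega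
  obtain ⟨x, yA, hx1, hx2, hyA1, hyA2, rfl, rfl⟩ := key A A' hAo hA'o hAA
  obtain ⟨x', yB, hx'1, hx'2, hyB1, hyB2, rfl, rfl⟩ := key B B' hBo hB'o hBB
  -- incomparability of {x} with univ \ {yB} forces x = yB
  have e1 : x = yB := by
    by_contra hne; exact c3 (singleton_subset_anti hne)
  have e2 : x' = yA := by
    by_contra hne; exact c6 (singleton_subset_anti hne)
  have hx : (x:ℕ) = (x':ℕ) := by
    have := e1 ▸ hyB1
    have := e2 ▸ hyA1
    omega
  apply c1
  have : x = x' := Fin.ext hx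
  rw [this]
end
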